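/- arXiv:1903.10618 — 2 statements merged into one kernel-verified Lean document; each statement's English description precedes it below -/
import Mathlib

section
/- Let k ≥ 60. Let ε > 0 and 0 < α < 1 be real numbers such that 2^k(1−α)^{2k} > (1+ε)/ε. Let m = (ln(2)·2^k − γ)·n for some real γ ∈ [0, ln(2)·2^k/4]. Let E = exp(−(ln 2/(8(1+ε)^2))·(1−α)^{4k}·n). Then for φ drawn from D_R(m,n,k), with probability greater than 1 − E, the number of assignments v with NumClausesSAT(φ, v) ≥ (1 − (1−(1−α)^{2k})/(2^k−1))·m is less than E · 2^n. -/
open scoped Classical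
open Finset

/-- An assignment of `n` Boolean variables. -/
abbrev Assignment (n : ℕ) := Fin n → Bool

/-- A clause: an ordered `k`-tuple of literals, each a variable index together with a sign. -/
abbrev Clause (n k : ℕ) := Fin k → Fin n × Bool

/-- A formula: an ordered `m`-tuple of clauses. -/
abbrev Formula (n k m : ℕ) := Fin m → Clause n k

/-- An assignment satisfies a clause if it satisfies at least one literal of the clause. -/
def SatClause {n k : ℕ} (v : Assignment n) (c : Clause n k) : Prop :=
  ∃ i, v (c i).1 = (c i).2

/-- An assignment satisfies a formula if it satisfies every clause. -/
def SatFormula {n k m : ℕ} (v : Assignment n) (φ : Formula n k m) : Prop :=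
  ∀ j, SatClause v (φ j)

/-- The number of clauses of `φ` satisfied by `v`. -/
noncomputable def numSat {n k m : ℕ} (φ : Formula n k m) (v : Assignment n) : ℕ :=
  (Finset.univ.filter fun j => SatClause v (φ j)).card

/-- The number of clauses of `φ` left unsatisfied by `v`. -/
noncomputable def numUnsat {n k m : ℕ} (φ : Formula n k m) (v : Assignment n) : ℕ :=
  (Finset.univ.filter fun j => ¬ SatClause v (φ j)).card

set_option maxHeartbeats 1000000

private lemma exp_neg_le_quad {x : ℝ} (hx : 0 ≤ x) : Real.exp (-x) ≤ 1 - x + x ^ 2 / 2 := by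
  have h1 : 1 + x + x ^ 2 / 2 ≤ Real.exp x := Real.quadratic_le_exp_of_nonneg hx
  have h3 : (0:ℝ) < 1 - x + x ^ 2 / 2 := by nlinarith [sq_nonneg (x - 1)]
  have h5 := mul_le_mul_of_nonneg_left h1 h3.le
  have h4 : 1 ≤ (1 - x + x ^ 2 / 2) * Real.exp x := by nlinarith [h5, pow_nonneg hx 4]
  rw [Real.exp_neg, inv_le_iff_one_le_mul₀ (Real.exp_pos x)]
  exact h4

private lemma card_unsat_clauses (n k : ℕ) (v : Assignment n) :
    ((univ : Finset (Clause n k)).filter fun c => ¬ SatClause v c).card = n ^ k := by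
  have : ((univ : Finset (Clause n k)).filter fun c => ¬ SatClause v c).card
      = (univ : Finset (Fin k → Fin n)).card := by
    apply Finset.card_bij' (fun c _ => fun i => (c i).1)
      (fun g _ => fun i => (g i, !(v (g i))))
    · intro c hc
      exact mem_univ _
    · intro g hg
      simp only [mem_filter, mem_univ, true_and, SatClause, not_exists]
      intro i
      simp
    · intro c hc
      simp only [mem_filter, mem_univ, true_and, SatClause, not_exists] at hc
      funext i
      have := hc i
      ext
      · rfl
      · simp only
        revert this
        cases h1 : v (c i).1 <;> cases h2 : (c i).2 <;> simp_all
    · intro g hg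
      rfl
  rw [this, Finset.card_univ]
  simp [Fintype.card_fun]

private lemma sum_pow_numUnsat (n k m : ℕ) (v : Assignment n) (x : ℝ) :
    ∑ φ : Formula n k m, x ^ numUnsat φ v
      = (((Fintype.card (Clause n k) : ℝ) - (n:ℝ) ^ k) + (n:ℝ) ^ k * x) ^ m := by
  have key : ∀ φ : Formula n k m,
      (∏ j : Fin m, (if SatClause v (φ j) then (1:ℝ) else x)) = x ^ numUnsat φ v := by
    intro φ
    rw [Finset.prod_ite]
    simp [numUnsat, Finset.prod_const]
  have hsum : ∑ c : Clause n k, (if SatClause v c then (1:ℝ) else x)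
      = ((Fintype.card (Clause n k) : ℝ) - (n:ℝ) ^ k) + (n:ℝ) ^ k * x := by
    rw [Finset.sum_ite]
    rw [Finset.sum_const, Finset.sum_const]
    rw [card_unsat_clauses n k v]
    have hsplit := Finset.card_filter_add_card_filter_not
      (s := (univ : Finset (Clause n k))) (p := fun c => SatClause v c)
    rw [card_unsat_clauses n k v, Finset.card_univ] at hsplit
    have : ((((univ : Finset (Clause n k)).filter fun c => SatClause v c)).card : ℝ)
        = (Fintype.card (Clause n k) : ℝ) - (n:ℝ) ^ k := by
      have := congrArg (fun z : ℕ => (z : ℝ)) hsplit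
      push_cast at this ⊢
      linarith
    simp only [nsmul_eq_mul, mul_one]
    rw [this]
    push_cast
    ring
  calc ∑ φ : Formula n k m, x ^ numUnsat φ v
      = ∑ φ : Formula n k m, ∏ j : Fin m, (if SatClause v (φ j) then (1:ℝ) else x) := by
        exact Finset.sum_congr rfl fun φ _ => (key φ).symm
    _ = ∏ _j : Fin m, ∑ c : Clause n k, (if SatClause v c then (1:ℝ) else x) := by
        rw [Finset.prod_univ_sum]
        rw [Fintype.piFinset_univ]
    _ = _ := by rw [hsum, Finset.prod_const, Finset.card_univ, Fintype.card_fin]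

/-- Let `k ≥ 60`, `ε > 0`, `0 < α < 1` with `2^k(1−α)^{2k} > (1+ε)/ε`, and
`m = (ln 2·2^k − γ)n` with `γ ∈ [0, ln 2·2^k/4]`.  Set
`E = exp(−(ln 2/(8(1+ε)²))(1−α)^{4k} n)`.  For `φ` drawn uniformly from all formulas with `m`
clauses, with probability greater than `1 − E` the number of assignments `v` with
`NumClausesSAT(φ,v) ≥ (1 − (1−(1−α)^{2k})/(2^k−1))·m` is less than `E·2^n`. -/
theorem false_positive_count_bound_at_threshold (n k m : ℕ) (hn : 0 < n) (hk : 60 ≤ k)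
    (hm : 0 < m) (ε α : ℝ) (hε : 0 < ε) (hα0 : 0 < α) (hα1 : α < 1)
    (hcond : 2 ^ k * (1 - α) ^ (2 * k) > (1 + ε) / ε)
    (γ : ℝ) (hγ0 : 0 ≤ γ) (hγ1 : γ ≤ Real.log 2 * 2 ^ k / 4)
    (hmval : (m : ℝ) = (Real.log 2 * 2 ^ k - γ) * n) :
    let T : ℝ := (1 - (1 - (1 - α) ^ (2 * k)) / (2 ^ k - 1)) * m
    let E : ℝ := Real.exp (-(Real.log 2 / (8 * (1 + ε) ^ 2)) * (1 - α) ^ (4 * k) * n)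
    (((univ : Finset (Formula n k m)).filter fun φ =>
        (((univ : Finset (Assignment n)).filter fun v =>
            T ≤ (numSat φ v : ℝ)).card : ℝ) < E * 2 ^ n).card : ℝ)
      / (Fintype.card (Formula n k m) : ℝ) > 1 - E := by
  intro T E
  -- ============ basic positivity facts ============
  have hn' : (0:ℝ) < n := by exact_mod_cast hn
  have hm' : (0:ℝ) < m := by exact_mod_cast hm
  have hα : (0:ℝ) < 1 - α := by linarith
  have hlog2 : (0:ℝ) < Real.log 2 := Real.log_pos (by norm_num)
  have h1e : (0:ℝ) < 1 + ε := by linarith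
  set q : ℝ := (1 - α) ^ (2 * k) with hq_def
  have hq0 : 0 < q := pow_pos hα _
  have hq1 : q < 1 := pow_lt_one₀ hα.le (by linarith) (by omega)
  have h2k1 : (1:ℝ) < 2 ^ k := one_lt_pow₀ (by norm_num) (by omega)
  have h2k0 : (0:ℝ) < 2 ^ k := by positivity
  have h2km1 : (0:ℝ) < 2 ^ k - 1 := by linarith
  have hnum : (1:ℝ) < 2 ^ k * q := by
    have h1 : (1:ℝ) < (1 + ε) / ε := by
      rw [lt_div_iff₀ hε]; linarith
    linarith [hcond]
  -- the condition 2^k q ε > 1 + ε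
  have hcond2 : (1 + ε) < 2 ^ k * q * ε := by
    have := (div_lt_iff₀ hε).mp hcond
    linarith
  -- ============ delta ============
  set δ : ℝ := (2 ^ k * q - 1) / (2 ^ k - 1) with hδ_def
  have hδ0 : 0 < δ := div_pos (by linarith) h2km1
  have hδ1 : δ < 1 := by
    rw [hδ_def, div_lt_one h2km1]
    nlinarith
  have hδε : q / (1 + ε) < δ := by
    rw [hδ_def, div_lt_div_iff₀ h1e h2km1]
    nlinarith
  set x : ℝ := Real.exp (-δ) with hx_def
  have hx0 : 0 < x := Real.exp_pos _
  have hx1 : x < 1 := by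
    rw [hx_def, ← Real.exp_zero]
    exact Real.exp_lt_exp.mpr (by linarith)
  set p : ℝ := 1 / 2 ^ k with hp_def
  have hp0 : 0 < p := by positivity
  have hp1 : p ≤ 1 := by
    rw [hp_def, div_le_one h2k0]; linarith
  -- ============ t ============
  set t : ℝ := (m : ℝ) * (1 - q) / (2 ^ k - 1) with ht_def
  have hTdef : T = (1 - (1 - q) / (2 ^ k - 1)) * m := rfl
  have htm : t = (m : ℝ) - T := by
    rw [hTdef, ht_def]; field_simp; ring
  have ht_eq : t = (1 - δ) * p * (m : ℝ) := by
    rw [ht_def, hδ_def, hp_def]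
    field_simp
    ring
  -- ============ the exponent constant ============
  set c : ℝ := Real.log 2 / (8 * (1 + ε) ^ 2) * q ^ 2 * n with hc_def
  have hc0 : 0 < c := by positivity
  have hq4k : (1 - α) ^ (4 * k) = q ^ 2 := by
    rw [hq_def, ← pow_mul]
    ring_nf
  have hE_eq : E = Real.exp (-c) := by
    show Real.exp _ = _
    rw [hq4k, hc_def]
    ring_nf
  have hE0 : 0 < E := by rw [hE_eq]; exact Real.exp_pos _
  -- p * m is large
  have hpm0 : (0:ℝ) < p * m := by positivity
  have hpm : (3/4) * Real.log 2 * n ≤ p * m := by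
    have h5 : p * (m:ℝ) = (Real.log 2 * 2 ^ k - γ) * n / 2 ^ k := by
      rw [hmval, hp_def]; ring
    rw [h5, le_div_iff₀ h2k0]
    nlinarith [mul_le_mul_of_nonneg_right
      (by linarith : (3/4) * (Real.log 2 * 2 ^ k) ≤ Real.log 2 * 2 ^ k - γ) hn'.le]
  -- key numeric inequality : 2c < p m δ² / 2
  have hkey : 2 * c < p * (m:ℝ) * δ ^ 2 / 2 := by
    have hδq2 : (q / (1 + ε)) ^ 2 < δ ^ 2 := by
      exact pow_lt_pow_left₀ hδε (by positivity) (by norm_num)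
    have h1 : p * (m:ℝ) * (q / (1 + ε)) ^ 2 < p * (m:ℝ) * δ ^ 2 :=
      (mul_lt_mul_iff_right₀ hpm0).mpr hδq2
    have h2 : (3/4) * Real.log 2 * n * (q / (1 + ε)) ^ 2 ≤ p * (m:ℝ) * (q / (1 + ε)) ^ 2 := by
      apply mul_le_mul_of_nonneg_right hpm (by positivity)
    have h3 : (3/4) * Real.log 2 * n * (q / (1 + ε)) ^ 2 = 6 * c := by
      rw [hc_def]
      field_simp
      all_goals first | ring | norm_num
    linarith [h1, h2, h3, hc0]
  -- ============ the core analytic bound ============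
  have hxquad : x ≤ 1 - δ + δ ^ 2 / 2 := exp_neg_le_quad hδ0.le
  have hexp_bound : p * m * (x - 1) + δ * t ≤ -(p * m * δ ^ 2 / 2) := by
    rw [ht_eq]
    have hA : p * m * (x - 1) ≤ p * m * (-δ + δ ^ 2 / 2) :=
      mul_le_mul_of_nonneg_left (by linarith) hpm0.le
    have hB : p * (m:ℝ) * (-δ + δ ^ 2 / 2) + δ * ((1 - δ) * p * (m:ℝ))
        = -(p * (m:ℝ) * δ ^ 2 / 2) := by ring
    linarith [hA, hB]
  -- ============ counting setup ============
  set U : ℝ := (n:ℝ) ^ k with hU_def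
  have hU0 : 0 < U := by positivity
  set C : ℝ := (Fintype.card (Clause n k) : ℝ) with hC_def
  have hCcard : Fintype.card (Clause n k) = (2 * n) ^ k := by
    simp [Fintype.card_fun]
    ring
  have hC : C = 2 ^ k * U := by
    rw [hC_def, hCcard, hU_def]
    push_cast
    ring
  have hC0 : 0 < C := by rw [hC]; positivity
  have hUpC : U = p * C := by rw [hC, hp_def]; field_simp
  -- ============ per-assignment tail bound ============
  have hperv : ∀ v : Assignment n,
      ((((univ : Finset (Formula n k m)).filter fun φ => T ≤ (numSat φ v : ℝ)).card : ℝ))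
        < C ^ m * (E * E) := by
    intro v
    set B := (univ : Finset (Formula n k m)).filter (fun φ => T ≤ (numSat φ v : ℝ)) with hB_def
    have hBle : ∀ φ ∈ B, ((numUnsat φ v : ℝ)) ≤ t := by
      intro φ hφ
      rw [hB_def, mem_filter] at hφ
      have hsplit := Finset.card_filter_add_card_filter_not
        (s := (univ : Finset (Fin m))) (p := fun j => SatClause v (φ j))
      rw [Finset.card_univ, Fintype.card_fin] at hsplit
      have hsum : (numSat φ v : ℝ) + (numUnsat φ v : ℝ) = m := by
        rw [numSat, numUnsat]
        exact_mod_cast hsplit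
      have := hφ.2
      linarith [htm]
    have hstep1 : (B.card : ℝ) * Real.exp (-δ * t) ≤ ∑ φ ∈ B, x ^ numUnsat φ v := by
      have hpt : ∀ φ ∈ B, Real.exp (-δ * t) ≤ x ^ numUnsat φ v := by
        intro φ hφ
        rw [hx_def, ← Real.exp_nat_mul]
        apply Real.exp_le_exp.mpr
        have h1 := hBle φ hφ
        have h2 : δ * (numUnsat φ v : ℝ) ≤ δ * t := mul_le_mul_of_nonneg_left h1 hδ0.le
        linarith [h2]
      calc (B.card : ℝ) * Real.exp (-δ * t) = B.card • Real.exp (-δ * t) :=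
            (nsmul_eq_mul _ _).symm
        _ ≤ ∑ φ ∈ B, x ^ numUnsat φ v := Finset.card_nsmul_le_sum B _ _ hpt
    have hstep2 : ∑ φ ∈ B, x ^ numUnsat φ v ≤ ∑ φ : Formula n k m, x ^ numUnsat φ v :=
      Finset.sum_le_sum_of_subset_of_nonneg (Finset.filter_subset _ _)
        (fun φ _ _ => pow_nonneg hx0.le _)
    have hmgf : ∑ φ : Formula n k m, x ^ numUnsat φ v = (C - U + U * x) ^ m := by
      rw [sum_pow_numUnsat n k m v x, hC_def, hU_def]
    have hfac : C - U + U * x = C * (1 - p + p * x) := by rw [hUpC]; ring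
    have h1p0 : (0:ℝ) ≤ 1 - p + p * x := by
      linarith [mul_nonneg hp0.le hx0.le, hp1]
    have hexp1 : 1 - p + p * x ≤ Real.exp (p * (x - 1)) := by
      have h := Real.add_one_le_exp (p * (x - 1))
      have h2 : p * (x - 1) + 1 = 1 - p + p * x := by ring
      linarith [h, h2]
    have hpow : (C - U + U * x) ^ m ≤ C ^ m * Real.exp (p * (m:ℝ) * (x - 1)) := by
      rw [hfac, mul_pow]
      apply mul_le_mul_of_nonneg_left _ (pow_nonneg hC0.le m)
      calc (1 - p + p * x) ^ m ≤ Real.exp (p * (x - 1)) ^ m :=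
            pow_le_pow_left₀ h1p0 hexp1 m
        _ = Real.exp (p * (m:ℝ) * (x - 1)) := by
            rw [← Real.exp_nat_mul]
            congr 1
            ring
    have hchain : (B.card : ℝ) * Real.exp (-δ * t)
        ≤ C ^ m * Real.exp (p * (m:ℝ) * (x - 1)) := by
      calc (B.card : ℝ) * Real.exp (-δ * t) ≤ ∑ φ ∈ B, x ^ numUnsat φ v := hstep1
        _ ≤ ∑ φ : Formula n k m, x ^ numUnsat φ v := hstep2
        _ = (C - U + U * x) ^ m := hmgf
        _ ≤ C ^ m * Real.exp (p * (m:ℝ) * (x - 1)) := hpow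
    have hBbound : (B.card : ℝ) ≤ C ^ m * Real.exp (p * (m:ℝ) * (x - 1) + δ * t) := by
      have h0 : Real.exp (-δ * t) * Real.exp (δ * t) = 1 := by
        rw [← Real.exp_add]
        norm_num
      calc (B.card : ℝ) = ((B.card : ℝ) * Real.exp (-δ * t)) * Real.exp (δ * t) := by
            rw [mul_assoc, h0, mul_one]
        _ ≤ (C ^ m * Real.exp (p * (m:ℝ) * (x - 1))) * Real.exp (δ * t) :=
            mul_le_mul_of_nonneg_right hchain (Real.exp_pos _).le
        _ = C ^ m * Real.exp (p * (m:ℝ) * (x - 1) + δ * t) := by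
            rw [mul_assoc, ← Real.exp_add]
    calc (B.card : ℝ) ≤ C ^ m * Real.exp (p * (m:ℝ) * (x - 1) + δ * t) := hBbound
      _ ≤ C ^ m * Real.exp (-(p * (m:ℝ) * δ ^ 2 / 2)) :=
          mul_le_mul_of_nonneg_left (Real.exp_le_exp.mpr hexp_bound) (pow_nonneg hC0.le m)
      _ < C ^ m * (E * E) := by
          rw [hE_eq, ← Real.exp_add]
          exact mul_lt_mul_of_pos_left (Real.exp_lt_exp.mpr (by linarith [hkey])) (pow_pos hC0 m)
  -- ============ exchanging the two sums ============
  have hswap : ∑ φ : Formula n k m,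
      (((univ : Finset (Assignment n)).filter fun v => T ≤ (numSat φ v : ℝ)).card)
      = ∑ v : Assignment n,
        (((univ : Finset (Formula n k m)).filter fun φ => T ≤ (numSat φ v : ℝ)).card) := by
    simp only [Finset.card_filter]
    exact Finset.sum_comm
  -- ============ total first-moment bound ============
  have hA2n : (Fintype.card (Assignment n)) = 2 ^ n := by simp [Fintype.card_fun]
  have hne : (univ : Finset (Assignment n)).Nonempty := Finset.univ_nonempty
  have hsumv : (∑ v : Assignment n,
      ((((univ : Finset (Formula n k m)).filter fun φ => T ≤ (numSat φ v : ℝ)).card : ℝ)))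
      < 2 ^ n * (C ^ m * (E * E)) := by
    calc (∑ v : Assignment n,
        ((((univ : Finset (Formula n k m)).filter fun φ => T ≤ (numSat φ v : ℝ)).card : ℝ)))
        < ∑ _v : Assignment n, C ^ m * (E * E) :=
          Finset.sum_lt_sum_of_nonempty hne (fun v _ => hperv v)
      _ = (Fintype.card (Assignment n) : ℝ) * (C ^ m * (E * E)) := by
          rw [Finset.sum_const, Finset.card_univ, nsmul_eq_mul]
      _ = 2 ^ n * (C ^ m * (E * E)) := by rw [hA2n]; push_cast; ring
  -- ============ Markov ============
  set Bad := (univ : Finset (Formula n k m)).filter (fun φ =>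
      ¬ ((((univ : Finset (Assignment n)).filter fun v =>
          T ≤ (numSat φ v : ℝ)).card : ℝ) < E * 2 ^ n)) with hBad_def
  have hmarkov : (Bad.card : ℝ) * (E * 2 ^ n) ≤ ∑ φ : Formula n k m,
      ((((univ : Finset (Assignment n)).filter fun v => T ≤ (numSat φ v : ℝ)).card : ℝ)) := by
    calc (Bad.card : ℝ) * (E * 2 ^ n) = Bad.card • (E * 2 ^ n) := (nsmul_eq_mul _ _).symm
      _ ≤ ∑ φ ∈ Bad,
          ((((univ : Finset (Assignment n)).filter fun v =>
              T ≤ (numSat φ v : ℝ)).card : ℝ)) := by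
          apply Finset.card_nsmul_le_sum
          intro φ hφ
          rw [hBad_def, mem_filter] at hφ
          exact not_lt.mp hφ.2
      _ ≤ ∑ φ : Formula n k m,
          ((((univ : Finset (Assignment n)).filter fun v =>
              T ≤ (numSat φ v : ℝ)).card : ℝ)) :=
          Finset.sum_le_sum_of_subset_of_nonneg (Finset.filter_subset _ _)
            (fun φ _ _ => by exact Nat.cast_nonneg _)
  have hsum_eq : (∑ φ : Formula n k m,
      ((((univ : Finset (Assignment n)).filter fun v => T ≤ (numSat φ v : ℝ)).card : ℝ)))
      = ∑ v : Assignment n,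
        ((((univ : Finset (Formula n k m)).filter fun φ => T ≤ (numSat φ v : ℝ)).card : ℝ)) := by
    have h := congrArg (fun z : ℕ => (z : ℝ)) hswap
    push_cast at h
    exact h
  have hBadlt : (Bad.card : ℝ) < C ^ m * E := by
    have h2n0 : (0:ℝ) < (2:ℝ) ^ n := by positivity
    have hlt : (Bad.card : ℝ) * (E * 2 ^ n) < (C ^ m * E) * (E * 2 ^ n) := by
      calc (Bad.card : ℝ) * (E * 2 ^ n)
          ≤ ∑ φ : Formula n k m,
            ((((univ : Finset (Assignment n)).filter fun v =>
                T ≤ (numSat φ v : ℝ)).card : ℝ)) := hmarkov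
        _ = ∑ v : Assignment n,
            ((((univ : Finset (Formula n k m)).filter fun φ =>
                T ≤ (numSat φ v : ℝ)).card : ℝ)) := hsum_eq
        _ < 2 ^ n * (C ^ m * (E * E)) := hsumv
        _ = (C ^ m * E) * (E * 2 ^ n) := by ring
    exact lt_of_mul_lt_mul_right hlt (by positivity)
  -- ============ conclusion ============
  have hsplitG : ((univ : Finset (Formula n k m)).filter fun φ =>
        (((univ : Finset (Assignment n)).filter fun v =>
            T ≤ (numSat φ v : ℝ)).card : ℝ) < E * 2 ^ n).card + Bad.card
      = Fintype.card (Formula n k m) := by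
    rw [hBad_def]
    rw [Finset.card_filter_add_card_filter_not]
    exact Finset.card_univ
  have hN_eq : (Fintype.card (Formula n k m) : ℝ) = C ^ m := by
    have hcf : Fintype.card (Formula n k m) = (Fintype.card (Clause n k)) ^ m := by
      simp [Fintype.card_fun]
    rw [hC_def, hcf]
    push_cast
    ring
  have hN0 : (0:ℝ) < (Fintype.card (Formula n k m) : ℝ) := by rw [hN_eq]; positivity
  rw [gt_iff_lt, lt_div_iff₀ hN0]
  have hGcard : ((((univ : Finset (Formula n k m)).filter fun φ =>
        (((univ : Finset (Assignment n)).filter fun v =>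
            T ≤ (numSat φ v : ℝ)).card : ℝ) < E * 2 ^ n).card : ℝ))
      = (Fintype.card (Formula n k m) : ℝ) - Bad.card := by
    have h := congrArg (fun z : ℕ => (z : ℝ)) hsplitG
    push_cast at h
    linarith
  rw [hGcard]
  have hfin : (Bad.card : ℝ) < E * (Fintype.card (Formula n k m) : ℝ) := by
    rw [hN_eq]
    calc (Bad.card : ℝ) < C ^ m * E := hBadlt
      _ = E * C ^ m := by ring
  have hring : (1 - E) * (Fintype.card (Formula n k m) : ℝ)
      = (Fintype.card (Formula n k m) : ℝ) - E * (Fintype.card (Formula n k m) : ℝ) := by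
    ring
  linarith [hfin, hring]
end

section
/- Suppose m ≥ (2^k·ln 2 − c)·n for some real constant c. Let p_sat > 0 be the probability that a formula drawn from D_R(m,n,k) is satisfiable. Let S be any set of satisfiable formulas with exactly m clauses and k literals per clause, and let p_γ ∈ [0,1]. If Pr_{(φ,a) ∼ D_pa(m,n,k)}[φ ∈ S] ≤ p_γ, then Pr_{φ ∼ D_S(m,n,k)}[φ ∈ S] ≤ p_γ · e^{cn/2^k} / p_sat. -/
open scoped Classical
open Finset

lemma card_clause (n k : ℕ) : Fintype.card (Clause n k) = (2*n)^k := by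
  simp [mul_comm]

lemma card_unsat_clause (n k : ℕ) (a : Assignment n) :
    Fintype.card {c : Clause n k // ¬ SatClause a c} = n ^ k := by
  have e : {c : Clause n k // ¬ SatClause a c} ≃ (Fin k → Fin n) :=
    { toFun := fun c i => (c.1 i).1
      invFun := fun f => ⟨fun i => (f i, !a (f i)), by
        rintro ⟨i, hi⟩; simp at hi⟩
      left_inv := by
        rintro ⟨c, hc⟩
        simp only [SatClause, not_exists] at hc
        apply Subtype.ext
        funext i
        have h := hc i
        refine Prod.ext rfl ?_
        simp only
        cases hb : (c i).2 <;> cases hb' : a (c i).1 <;> simp_all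
      right_inv := fun f => rfl }
  rw [Fintype.card_congr e]
  simp

lemma card_sat_clause (n k : ℕ) (a : Assignment n) :
    Fintype.card {c : Clause n k // SatClause a c} = (2*n) ^ k - n ^ k := by
  have h1 := Fintype.card_subtype_compl (p := fun c : Clause n k => SatClause a c)
  have h2 := card_unsat_clause n k a
  have h3 := card_clause n k
  have h4 : Fintype.card {c : Clause n k // SatClause a c} ≤ Fintype.card (Clause n k) :=
    Fintype.card_subtype_le _
  omega

lemma card_sat_formula (n k m : ℕ) (a : Assignment n) :
    (univ.filter fun φ : Formula n k m => SatFormula a φ).card = ((2*n)^k - n^k) ^ m := by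
  rw [← Fintype.card_subtype]
  have e : {φ : Formula n k m // SatFormula a φ} ≃ (Fin m → {c : Clause n k // SatClause a c}) :=
    (Equiv.subtypeEquivRight (fun φ => Iff.rfl)).trans Equiv.subtypePiEquivPi
  rw [Fintype.card_congr e, Fintype.card_fun, Fintype.card_fin, card_sat_clause]

lemma card_pairs (n k m : ℕ) :
    (univ.filter fun p : Formula n k m × Assignment n => SatFormula p.2 p.1).card
      = 2^n * ((2*n)^k - n^k) ^ m := by
  rw [Finset.card_filter, Fintype.sum_prod_type_right]
  have : ∀ a : Assignment n,
      (∑ φ : Formula n k m, if SatFormula a φ then 1 else 0) = ((2*n)^k - n^k) ^ m := by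
    intro a
    rw [← Finset.card_filter, card_sat_formula]
  simp only [this, Finset.sum_const, Finset.card_univ, smul_eq_mul]
  simp [mul_comm]

lemma key_ineq (n k m : ℕ) (hk : 0 < k) (c : ℝ)
    (hmge : (2 ^ k * Real.log 2 - c) * n ≤ (m : ℝ)) :
    (2:ℝ)^n * ((1:ℝ) - (1/2)^k)^m ≤ Real.exp (c * n / 2 ^ k) := by
  set t : ℝ := 1 - (1/2)^k with ht
  have htpow : ((1:ℝ)/2)^k < 1 := pow_lt_one₀ (by norm_num) (by norm_num) hk.ne'
  have ht0 : 0 < t := by rw [ht]; linarith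
  have hlog : Real.log t ≤ -((1:ℝ)/2)^k := by
    have := Real.log_le_sub_one_of_pos ht0
    simp [ht] at this ⊢
    linarith
  have hpk : ((1:ℝ)/2)^k = 1/2^k := by rw [div_pow, one_pow]
  have hone : (2:ℝ)^k * (1/2)^k = 1 := by rw [hpk]; field_simp
  have h2 : (m:ℝ) * Real.log t ≤ (m:ℝ) * (-((1:ℝ)/2)^k) :=
    mul_le_mul_of_nonneg_left hlog (Nat.cast_nonneg m)
  have h3 : (m:ℝ) * (-((1:ℝ)/2)^k) ≤ ((2^k*Real.log 2 - c) * n) * (-((1:ℝ)/2)^k) := by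
    apply mul_le_mul_of_nonpos_right hmge
    have : (0:ℝ) < ((1:ℝ)/2)^k := by positivity
    linarith
  have key : ((2^k*Real.log 2 - c) * (n:ℝ)) * (-((1:ℝ)/2)^k)
      = -((n:ℝ) * Real.log 2) + c * n * (1/2)^k := by
    linear_combination (-(Real.log 2) * (n:ℝ)) * hone
  have hcn : c * n / 2^k = c * n * ((1:ℝ)/2)^k := by rw [hpk]; ring
  have h1 : (n:ℝ) * Real.log 2 + m * Real.log t ≤ c * n / 2^k := by
    rw [hcn]; linarith
  have e1 : (2:ℝ)^n = Real.exp ((n:ℝ) * Real.log 2) := by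
    rw [Real.exp_nat_mul, Real.exp_log two_pos]
  have e2 : t^m = Real.exp ((m:ℝ) * Real.log t) := by
    rw [Real.exp_nat_mul, Real.exp_log ht0]
  rw [e1, e2, ← Real.exp_add]
  exact Real.exp_le_exp.mpr h1

/-- Suppose `m ≥ (2^k·ln 2 − c)n` for a real constant `c`.  Let `p_sat > 0`
be the probability that a uniformly random formula with `m` clauses is satisfiable.  Let `S`
be any set of satisfiable formulas with `m` clauses and `p_γ ∈ [0,1]`.  If, for `(φ,a)` drawn
uniformly among pairs of a formula and a satisfying assignment, `Pr[φ ∈ S] ≤ p_γ`, then for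
`φ` drawn uniformly among satisfiable formulas, `Pr[φ ∈ S] ≤ p_γ·e^{cn/2^k}/p_sat`. -/
theorem planted_to_satisfiable_at_threshold (n k m : ℕ) (hn : 0 < n) (hk : 0 < k) (hm : 0 < m)
    (c : ℝ) (hmge : (2 ^ k * Real.log 2 - c) * n ≤ (m : ℝ))
    (psat : ℝ)
    (hpsat : psat = (((univ : Finset (Formula n k m)).filter fun φ =>
        ∃ a : Assignment n, SatFormula a φ).card : ℝ) / (Fintype.card (Formula n k m) : ℝ))
    (hpsat0 : 0 < psat)
    (S : Finset (Formula n k m)) (hsat : ∀ φ ∈ S, ∃ a : Assignment n, SatFormula a φ)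
    (pγ : ℝ) (hpγ0 : 0 ≤ pγ) (hpγ1 : pγ ≤ 1)
    (hplanted :
      ((((univ : Finset (Formula n k m × Assignment n)).filter fun p =>
          SatFormula p.2 p.1 ∧ p.1 ∈ S).card : ℝ)
        / (((univ : Finset (Formula n k m × Assignment n)).filter fun p =>
          SatFormula p.2 p.1).card : ℝ)) ≤ pγ) :
    (S.card : ℝ) / (((univ : Finset (Formula n k m)).filter fun φ =>
        ∃ a : Assignment n, SatFormula a φ).card : ℝ)
      ≤ pγ * Real.exp (c * n / 2 ^ k) / psat := by
  set Sat := (univ : Finset (Formula n k m)).filter fun φ => ∃ a : Assignment n, SatFormula a φ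
    with hSatdef
  set P := (univ : Finset (Formula n k m × Assignment n)).filter fun p => SatFormula p.2 p.1
    with hPdef
  set PS := (univ : Finset (Formula n k m × Assignment n)).filter fun p =>
      SatFormula p.2 p.1 ∧ p.1 ∈ S with hPSdef
  -- basic counts
  have hlt : n^k < (2*n)^k := Nat.pow_lt_pow_left (by omega) hk.ne'
  have hPcard : P.card = 2^n * ((2*n)^k - n^k) ^ m := card_pairs n k m
  have hPpos : 0 < P.card := by
    rw [hPcard]
    have hx : 0 < (2*n)^k - n^k := by omega
    exact Nat.mul_pos (pow_pos (by norm_num) n) (pow_pos hx m)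
  have hN : Fintype.card (Formula n k m) = ((2*n)^k) ^ m := by
    simp [mul_comm]
  have hNpos : (0:ℝ) < (Fintype.card (Formula n k m) : ℝ) := by
    have hne : Nonempty (Formula n k m) := ⟨fun _ _ => (⟨0, hn⟩, true)⟩
    have : 0 < Fintype.card (Formula n k m) := Fintype.card_pos
    exact_mod_cast this
  -- S.card ≤ PS.card
  have hS_PS : S.card ≤ PS.card := by
    classical
    apply Finset.card_le_card_of_injOn
      (fun φ => (φ, if h : ∃ a : Assignment n, SatFormula a φ then Classical.choose h
        else fun _ => true))
    · intro φ hφ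
      have h := hsat φ hφ
      simp only [hPSdef, Finset.mem_filter, Finset.mem_univ, true_and, dif_pos h]
      exact Finset.mem_filter.mpr ⟨Finset.mem_univ _, Classical.choose_spec h, hφ⟩
    · intro x _ y _ hxy
      exact congrArg Prod.fst hxy
  -- PS.card ≤ pγ * P.card
  have hPS_le : (PS.card : ℝ) ≤ pγ * P.card := by
    have hP0 : (0:ℝ) < (P.card : ℝ) := by exact_mod_cast hPpos
    calc (PS.card : ℝ) = ((PS.card : ℝ) / P.card) * P.card := by field_simp
    _ ≤ pγ * P.card := mul_le_mul_of_nonneg_right hplanted hP0.le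
  -- real-count inequality
  have hle : n^k ≤ (2*n)^k := hlt.le
  have hkey : ((P.card : ℝ)) ≤ Real.exp (c * n / 2 ^ k) * (Fintype.card (Formula n k m) : ℝ) := by
    rw [hPcard, hN]
    push_cast [Nat.cast_sub hle]
    have hfac : ((2*n:ℝ))^k - (n:ℝ)^k = ((2*n:ℝ))^k * (1 - (1/2)^k) := by
      have : ((2*n:ℝ))^k * ((1:ℝ)/2)^k = (n:ℝ)^k := by
        rw [← mul_pow]; ring_nf
      linarith [this]
    rw [hfac, mul_pow]
    calc (2:ℝ)^n * ((((2*n:ℝ))^k) ^ m * ((1:ℝ) - (1/2)^k)^m)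
        = ((2:ℝ)^n * ((1:ℝ) - (1/2)^k)^m) * (((2*n:ℝ))^k) ^ m := by ring
      _ ≤ Real.exp (c * n / 2 ^ k) * (((2*n:ℝ))^k) ^ m := by
          apply mul_le_mul_of_nonneg_right (key_ineq n k m hk c hmge)
          positivity
  -- Sat.card > 0
  have hSatpos : (0:ℝ) < (Sat.card : ℝ) := by
    rw [hpsat] at hpsat0
    rcases div_pos_iff.mp hpsat0 with ⟨h, _⟩ | ⟨_, h⟩
    · exact h
    · linarith
  -- conclude
  rw [hpsat, div_div_eq_mul_div]
  rw [div_le_div_iff₀ hSatpos hSatpos]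
  have hnum : (S.card : ℝ) ≤ pγ * Real.exp (c * n / 2 ^ k) * (Fintype.card (Formula n k m) : ℝ) := by
    calc (S.card : ℝ) ≤ (PS.card : ℝ) := by exact_mod_cast hS_PS
      _ ≤ pγ * P.card := hPS_le
      _ ≤ pγ * (Real.exp (c * n / 2 ^ k) * (Fintype.card (Formula n k m) : ℝ)) :=
          mul_le_mul_of_nonneg_left hkey hpγ0
      _ = pγ * Real.exp (c * n / 2 ^ k) * (Fintype.card (Formula n k m) : ℝ) := by ring
  nlinarith [hSatpos, hnum]
end
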